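/- Let G be a Menger algebra of rank n and H a strong subset of G. Then R_H is a v-cancellative v-congruence if and only if W_H is l-consistent in G. -/

import Mathlib

/-- Superassociativity of the (n+1)-ary Menger operation. -/
def SuperAssoc {G : Type*} (n : ℕ) (op : G → (Fin n → G) → G) : Prop :=
  ∀ (f : G) (g h : Fin n → G), op (op f g) h = op f (fun i => op (g i) h)

/-- The set `T_n(G)` of elementary translations. -/
inductive IsTranslation {G : Type*} (n : ℕ) (op : G → (Fin n → G) → G) : (G → G) → Prop
  | id : IsTranslation n op (fun x => x)
  | step (t : G → G) (ht : IsTranslation n op t) (a : G) (i : Fin n) (b : Fin n → G) :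
      IsTranslation n op (fun x => op a (Function.update b i (t x)))

/-- `ρ_H⟨a⟩ = {t ∈ T_n(G) | t(a) ∈ H}`. -/
def rhoSet {G : Type*} (n : ℕ) (op : G → (Fin n → G) → G) (H : Set G) (a : G) :
    Set (G → G) :=
  {t | IsTranslation n op t ∧ t a ∈ H}

/-- `ρ°_H⟨t⟩ = {a ∈ G | t(a) ∈ H}`. -/
def rhoCirc {G : Type*} (n : ℕ) (op : G → (Fin n → G) → G) (H : Set G) (t : G → G) :
    Set G :=
  {a | t a ∈ H}

/-- `W_H = {a ∈ G | ρ_H⟨a⟩ = ∅}`. -/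
def WH {G : Type*} (n : ℕ) (op : G → (Fin n → G) → G) (H : Set G) : Set G :=
  {a | rhoSet n op H a = ∅}

/-- `R_H = {(a,b) | ρ_H⟨a⟩ = ρ_H⟨b⟩}`. -/
def RH {G : Type*} (n : ℕ) (op : G → (Fin n → G) → G) (H : Set G) : G → G → Prop :=
  fun a b => rhoSet n op H a = rhoSet n op H b

/-- A subset `H` is strong. -/
def Strong {G : Type*} (n : ℕ) (op : G → (Fin n → G) → G) (H : Set G) : Prop :=
  ∀ a b : G, (rhoSet n op H a ∩ rhoSet n op H b).Nonempty →
    rhoSet n op H a = rhoSet n op H b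

lemma trans_comp {G : Type*} {n : ℕ} {op : G → (Fin n → G) → G}
    {s t : G → G} (hs : IsTranslation n op s) (ht : IsTranslation n op t) :
    IsTranslation n op (fun x => s (t x)) := by
  induction hs with
  | id => exact ht
  | step t' ht' a i b ih => exact IsTranslation.step _ ih a i b

lemma rho_map {G : Type*} {n : ℕ} {op : G → (Fin n → G) → G} {H : Set G} {a b : G}
    {t : G → G} (ht : IsTranslation n op t)
    (h : rhoSet n op H a = rhoSet n op H b) :
    rhoSet n op H (t a) = rhoSet n op H (t b) := by
  ext s
  constructor
  · rintro ⟨hst, hmem⟩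
    refine ⟨hst, ?_⟩
    have h1 : (fun x => s (t x)) ∈ rhoSet n op H a := ⟨trans_comp hst ht, hmem⟩
    rw [h] at h1
    exact h1.2
  · rintro ⟨hst, hmem⟩
    refine ⟨hst, ?_⟩
    have h1 : (fun x => s (t x)) ∈ rhoSet n op H b := ⟨trans_comp hst ht, hmem⟩
    rw [← h] at h1
    exact h1.2

theorem stmt10 {G : Type*} [Nonempty G] {n : ℕ} (hn : 1 ≤ n)
    (op : G → (Fin n → G) → G) (hop : SuperAssoc n op) (H : Set G) (hs : Strong n op H) :
    (Equivalence (RH n op H) ∧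
     (∀ (z : G) (x y : Fin n → G), (∀ i, RH n op H (x i) (y i)) →
        RH n op H (op z x) (op z y)) ∧
     (∀ (x y u : G) (w : Fin n → G) (i : Fin n),
        RH n op H (op u (Function.update w i x)) (op u (Function.update w i y)) →
        RH n op H x y)) ↔
    (∀ (g : G) (t : G → G), IsTranslation n op t → t g ∈ WH n op H → g ∈ WH n op H) := by
  constructor
  · rintro ⟨-, -, hcanc⟩ g t ht htg
    induction ht generalizing g with
    | id => exact htg
    | step t' ht' a i b ih =>
      apply ih
      set c := t' g with hc
      set v := op a (Function.update b i c) with hv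
      have hvW : rhoSet n op H v = ∅ := htg
      have hwt : IsTranslation n op (fun x => op a (Function.update b i x)) :=
        IsTranslation.step _ IsTranslation.id a i b
      have hv2 : rhoSet n op H (op a (Function.update b i v)) = ∅ := by
        by_contra hne
        obtain ⟨s, hst, hmem⟩ := Set.nonempty_iff_ne_empty.mpr hne
        have : (fun x => s (op a (Function.update b i x))) ∈ rhoSet n op H v :=
          ⟨trans_comp hst hwt, hmem⟩
        rw [hvW] at this
        exact this
      have hR : RH n op H c v := hcanc c v a b i (by
        show rhoSet n op H (op a (Function.update b i c)) =
          rhoSet n op H (op a (Function.update b i v))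
        rw [hv2]; exact hvW)
      show rhoSet n op H c = ∅
      rw [hR]; exact hvW
  · intro hcons
    refine ⟨⟨fun _ => rfl, fun h => h.symm, fun h1 h2 => h1.trans h2⟩, ?_, ?_⟩
    · intro z x y hxy
      have key : ∀ k : ℕ, k ≤ n →
          RH n op H (op z x) (op z (fun i => if i.val < k then y i else x i)) := by
        intro k hk
        induction k with
        | zero =>
          have : (fun i : Fin n => if i.val < 0 then y i else x i) = x := by
            funext i; simp
          rw [this]
          rfl
        | succ k ihk =>
          have hkn : k < n := hk
          set j : Fin n := ⟨k, hkn⟩ with hj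
          set vk : Fin n → G := fun i => if i.val < k then y i else x i with hvk
          have ht : IsTranslation n op (fun w => op z (Function.update vk j w)) :=
            IsTranslation.step _ IsTranslation.id z j vk
          have step1 : rhoSet n op H (op z (Function.update vk j (x j))) =
              rhoSet n op H (op z (Function.update vk j (y j))) :=
            rho_map ht (hxy j)
          have e1 : Function.update vk j (x j) = vk := by
            funext i
            by_cases hij : i = j
            · subst hij; simp [hvk, hj]
            · rw [Function.update_of_ne hij]
          have e2 : Function.update vk j (y j) =
              (fun i : Fin n => if i.val < k + 1 then y i else x i) := by
            funext i
            by_cases hij : i = j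
            · subst hij; simp [hj]
            · rw [Function.update_of_ne hij]
              have hne : i.val ≠ k := fun hv => hij (Fin.ext hv)
              simp only [hvk]
              by_cases hlt : i.val < k
              · rw [if_pos hlt, if_pos (by omega)]
              · rw [if_neg hlt, if_neg (by omega)]
          rw [e1, e2] at step1
          exact (ihk (le_of_lt hk)).trans step1
      have := key n le_rfl
      have e3 : (fun i : Fin n => if i.val < n then y i else x i) = y := by
        funext i; simp [i.isLt]
      rwa [e3] at this
    · intro x y u w i h
      have hwt : IsTranslation n op (fun z => op u (Function.update w i z)) :=
        IsTranslation.step _ IsTranslation.id u i w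
      rcases Set.eq_empty_or_nonempty (rhoSet n op H (op u (Function.update w i x)))
        with he | ⟨s, hst, hmem⟩
      · have hx : x ∈ WH n op H := hcons x _ hwt he
        have hy : y ∈ WH n op H := hcons y _ hwt (by
          show rhoSet n op H (op u (Function.update w i y)) = ∅
          rw [← h]; exact he)
        show rhoSet n op H x = rhoSet n op H y
        rw [hx, hy]
      · have hmem' : s (op u (Function.update w i y)) ∈ H := by
          have : s ∈ rhoSet n op H (op u (Function.update w i y)) := h ▸ ⟨hst, hmem⟩
          exact this.2
        exact hs x y ⟨fun z => s (op u (Function.update w i z)),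
          ⟨trans_comp hst hwt, hmem⟩, ⟨trans_comp hst hwt, hmem'⟩⟩
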